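/- Generator difference identity for two interacting versus two independent particles: for every g : V → ℝ and every (z,w) ∈ V×V, (A^{(2)} − A⊕A)(g⊗g)(z,w) = −1_{z∼w} · α_z^{a−1} · α_w^{a−1} · (g(z) − g(w))²; in particular this quantity is always ≤ 0. -/

import Mathlib

open scoped BigOperators

/-- Configuration space: at most `α x` particles at each site `x`. -/
abbrev Conf {V : Type*} (α : V → ℕ) : Type _ := ∀ x : V, Fin (α x + 1)

/-- The configuration `η` with one particle moved from `x` to `y`. -/
def move {V : Type*} [DecidableEq V] (α : V → ℕ) (η : Conf α) (x y : V) : Conf α :=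
  Function.update
    (Function.update η x ⟨(η x : ℕ) - 1, by have := (η x).isLt; omega⟩)
    y ⟨min ((η y : ℕ) + 1) (α y), by
      have := Nat.min_le_right ((η y : ℕ) + 1) (α y); omega⟩

/-- Jump rate of the partial exclusion process of interacting BTM(a):
rate for moving a particle from `x` to `y`.  It vanishes if `η x = 0` or
`η y = α y`, so `move` is only effectively used where it is well defined. -/
noncomputable def jumpRate {V : Type*} (α : V → ℕ) (a : ℝ) (η : Conf α) (x y : V) : ℝ :=
  ((η x : ℕ) : ℝ) * (α x : ℝ) ^ (a - 1) * (α y : ℝ) ^ a *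
    (1 - ((η y : ℕ) : ℝ) / (α y : ℝ))

/-- The partial exclusion generator `L` in environment `α`. -/
noncomputable def gen {V : Type*} [Fintype V] [DecidableEq V] (α : V → ℕ) (a : ℝ)
    (adj : V → V → Prop) [DecidableRel adj] (φ : Conf α → ℝ) (η : Conf α) : ℝ :=
  ∑ x : V, ∑ y : V,
    if adj x y then jumpRate α a η x y * (φ (move α η x y) - φ η) else 0

/-- The single-particle (Bouchaud trap model) generator `A`. -/
noncomputable def sgen {V : Type*} [Fintype V] (α : V → ℕ) (a : ℝ)
    (adj : V → V → Prop) [DecidableRel adj] (g : V → ℝ) (x : V) : ℝ :=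
  (α x : ℝ) ^ (a - 1) * ∑ y : V, if adj x y then (α y : ℝ) ^ a * (g y - g x) else 0

/-- The two-particle generator `A^{(2)}` of two interacting BTM(a) particles. -/
noncomputable def gen2 {V : Type*} [Fintype V] [DecidableEq V] (α : V → ℕ) (a : ℝ)
    (adj : V → V → Prop) [DecidableRel adj] (h : V → V → ℝ) (z w : V) : ℝ :=
  (α z : ℝ) ^ (a - 1) *
      (∑ u : V, if adj z u then
        (α u : ℝ) ^ a * (1 - (if u = w then 1 else 0) / (α u : ℝ)) * (h u w - h z w)
      else 0)
    + (α w : ℝ) ^ (a - 1) *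
      (∑ u : V, if adj w u then
        (α u : ℝ) ^ a * (1 - (if u = z then 1 else 0) / (α u : ℝ)) * (h z u - h z w)
      else 0)


private lemma gen_diff_aux {V : Type*} [Fintype V] [DecidableEq V]
    (adj : V → V → Prop) [DecidableRel adj] (α : V → ℕ) (a : ℝ)
    (p q : V) (f : V → ℝ) :
    (∑ u : V, if adj p u then
        (α u : ℝ) ^ a * (1 - (if u = q then 1 else 0) / (α u : ℝ)) * f u
      else 0)
    = (∑ u : V, if adj p u then (α u : ℝ) ^ a * f u else 0)
      - (if adj p q then (α q : ℝ) ^ a / (α q : ℝ) * f q else 0) := by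
  have h := Finset.sum_ite_eq' (Finset.univ : Finset V) q
    (fun u => if adj p u then (α u : ℝ) ^ a / (α u : ℝ) * f u else 0)
  simp only [Finset.mem_univ, if_true] at h
  rw [← h, ← Finset.sum_sub_distrib]
  apply Finset.sum_congr rfl
  intro u _
  by_cases h2 : u = q
  · subst h2; by_cases h1 : adj p u <;> simp [h1] <;> ring
  · by_cases h1 : adj p u <;> simp [h1, h2] <;> ring

/-- generator difference identity for two interacting versus two
independent particles, and its non-positivity. -/
theorem gen_difference {V : Type*} [Fintype V] [DecidableEq V]
    (adj : V → V → Prop) [DecidableRel adj]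
    (hsym : ∀ x y, adj x y → adj y x) (hirr : ∀ x, ¬ adj x x)
    (a : ℝ) (ha0 : 0 ≤ a) (ha1 : a ≤ 1)
    (α : V → ℕ) (hα : ∀ x, 1 ≤ α x)
    (g : V → ℝ) (z w : V) :
    gen2 α a adj (fun u v => g u * g v) z w
        - (sgen α a adj (fun u => g u * g w) z + sgen α a adj (fun v => g z * g v) w)
      = -((if adj z w then 1 else 0) * (α z : ℝ) ^ (a - 1) * (α w : ℝ) ^ (a - 1) *
          (g z - g w) ^ 2)
    ∧ gen2 α a adj (fun u v => g u * g v) z w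
        - (sgen α a adj (fun u => g u * g w) z + sgen α a adj (fun v => g z * g v) w)
      ≤ 0 := by
  have hz : (0:ℝ) < (α z : ℝ) := by exact_mod_cast hα z
  have hw : (0:ℝ) < (α w : ℝ) := by exact_mod_cast hα w
  have key : gen2 α a adj (fun u v => g u * g v) z w
        - (sgen α a adj (fun u => g u * g w) z + sgen α a adj (fun v => g z * g v) w)
      = -((if adj z w then 1 else 0) * (α z : ℝ) ^ (a - 1) * (α w : ℝ) ^ (a - 1) *
          (g z - g w) ^ 2) := by
    unfold gen2 sgen
    rw [gen_diff_aux adj α a z w (fun u => g u * g w - g z * g w),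
        gen_diff_aux adj α a w z (fun u => g z * g u - g z * g w)]
    by_cases hadj : adj z w
    · have hadj' : adj w z := hsym z w hadj
      simp only [hadj, hadj', if_true,
        Real.rpow_sub_one hz.ne' a, Real.rpow_sub_one hw.ne' a]
      ring
    · have hadj' : ¬ adj w z := fun h => hadj (hsym w z h)
      simp only [hadj, hadj', if_false]
      ring
  exact ⟨key, by
    rw [key]
    have h1 : (0:ℝ) ≤ (if adj z w then (1:ℝ) else 0) := by positivity
    have h2 : (0:ℝ) ≤ (α z : ℝ) ^ (a - 1) := Real.rpow_nonneg hz.le _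
    have h3 : (0:ℝ) ≤ (α w : ℝ) ^ (a - 1) := Real.rpow_nonneg hw.le _
    exact neg_nonpos.mpr
      (mul_nonneg (mul_nonneg (mul_nonneg h1 h2) h3) (sq_nonneg _))⟩
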